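/- For every real number β with −1 < β < 1, one has (11β² + 4)√(1 − β²) − (6β³ + 9β)·arccos(β) > 0. -/

import Mathlib

open Real Set

private lemma rho1_pos {x : ℝ} (h₁ : -1 < x) (h₂ : x < 1) :
    0 < Real.sqrt (1 - x^2) - x * Real.arccos x := by
  have hx2 : 0 < 1 - x^2 := by nlinarith
  have hs : 0 < Real.sqrt (1 - x^2) := Real.sqrt_pos.2 hx2
  rcases le_or_gt x 0 with hx | hx
  · have := Real.arccos_nonneg x
    nlinarith
  · have hθ : 0 < Real.arccos x := Real.arccos_pos.2 h₂
    have hθ2 : Real.arccos x < π / 2 := Real.arccos_lt_pi_div_two.2 hx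
    have ht := Real.lt_tan hθ hθ2
    rw [Real.tan_eq_sin_div_cos, Real.sin_arccos,
      Real.cos_arccos h₁.le h₂.le] at ht
    have := (lt_div_iff₀ hx).1 ht
    nlinarith

private lemma hasDerivAt_sqrt_aux {x : ℝ} (h₁ : -1 < x) (h₂ : x < 1) :
    HasDerivAt (fun y : ℝ => Real.sqrt (1 - y^2))
      (1 / (2 * Real.sqrt (1 - x^2)) * -(2*x)) x := by
  have hx2 : 0 < 1 - x^2 := by nlinarith
  have hu : HasDerivAt (fun y : ℝ => 1 - y^2) (-(2*x)) x := by
    simpa using (hasDerivAt_pow 2 x).const_sub 1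
  exact (Real.hasDerivAt_sqrt hx2.ne').comp x hu

private lemma hasDerivAt_G {x : ℝ} (h₁ : -1 < x) (h₂ : x < 1) :
    HasDerivAt (fun y : ℝ => 27*y*Real.sqrt (1 - y^2) - (18*y^2+9)*Real.arccos y)
      (36*(Real.sqrt (1 - x^2) - x * Real.arccos x)) x := by
  have hx2 : 0 < 1 - x^2 := by nlinarith
  have hs : 0 < Real.sqrt (1 - x^2) := Real.sqrt_pos.2 hx2
  have hss : Real.sqrt (1 - x^2) * Real.sqrt (1 - x^2) = 1 - x^2 :=
    Real.mul_self_sqrt hx2.le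
  have hsq := hasDerivAt_sqrt_aux h₁ h₂
  have hac := Real.hasDerivAt_arccos h₁.ne' h₂.ne
  have hd1 : HasDerivAt (fun y : ℝ => 27*y) 27 x := by
    simpa using (hasDerivAt_id x).const_mul 27
  have hd2 : HasDerivAt (fun y : ℝ => 18*y^2+9) (36*x) x := by
    have h : HasDerivAt (fun y : ℝ => 18*y^2+9) (18*(2*x)) x := by
      simpa using ((hasDerivAt_pow 2 x).const_mul 18).add_const 9
    convert h using 1; ring
  have h := (hd1.mul hsq).sub (hd2.mul hac)
  refine h.congr_deriv (Eq.symm ?_)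
  field_simp
  ring_nf
  linear_combination 9 * hss

private lemma G_neg {x : ℝ} (h₁ : -1 < x) (h₂ : x < 1) :
    27*x*Real.sqrt (1 - x^2) - (18*x^2+9)*Real.arccos x < 0 := by
  set G := fun y : ℝ => 27*y*Real.sqrt (1 - y^2) - (18*y^2+9)*Real.arccos y with hG
  have hcont : Continuous G := by
    apply Continuous.sub
    · exact (continuous_const.mul continuous_id).mul
        (Real.continuous_sqrt.comp (by continuity))
    · exact (by continuity : Continuous fun y : ℝ => 18*y^2+9).mul Real.continuous_arccos
  have hmono : StrictMonoOn G (Icc x 1) := by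
    apply strictMonoOn_of_deriv_pos (convex_Icc _ _) hcont.continuousOn
    intro y hy
    rw [interior_Icc] at hy
    have hy1 : -1 < y := lt_trans h₁ hy.1
    rw [(hasDerivAt_G hy1 hy.2).deriv]
    have := rho1_pos hy1 hy.2
    linarith
  have hG1 : G 1 = 0 := by
    simp [hG, Real.arccos_one]
  have h := hmono (left_mem_Icc.2 h₂.le) (right_mem_Icc.2 h₂.le) h₂
  rw [hG1] at h
  exact h

private lemma hasDerivAt_F {x : ℝ} (h₁ : -1 < x) (h₂ : x < 1) :
    HasDerivAt (fun y : ℝ => (11*y^2+4)*Real.sqrt (1 - y^2) - (6*y^3+9*y)*Real.arccos y)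
      (27*x*Real.sqrt (1 - x^2) - (18*x^2+9)*Real.arccos x) x := by
  have hx2 : 0 < 1 - x^2 := by nlinarith
  have hs : 0 < Real.sqrt (1 - x^2) := Real.sqrt_pos.2 hx2
  have hss : Real.sqrt (1 - x^2) * Real.sqrt (1 - x^2) = 1 - x^2 :=
    Real.mul_self_sqrt hx2.le
  have hsq := hasDerivAt_sqrt_aux h₁ h₂
  have hac := Real.hasDerivAt_arccos h₁.ne' h₂.ne
  have hd1 : HasDerivAt (fun y : ℝ => 11*y^2+4) (22*x) x := by
    have h : HasDerivAt (fun y : ℝ => 11*y^2+4) (11*(2*x)) x := by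
      simpa using ((hasDerivAt_pow 2 x).const_mul 11).add_const 4
    convert h using 1; ring
  have hd2 : HasDerivAt (fun y : ℝ => 6*y^3+9*y) (18*x^2+9) x := by
    have h : HasDerivAt (fun y : ℝ => 6*y^3+9*y) (6*(3*x^2)+9*1) x := by
      have := ((hasDerivAt_pow 3 x).const_mul 6).add ((hasDerivAt_id' x).const_mul 9)
      simpa [Pi.add_def] using this
    convert h using 1; ring
  have h := (hd1.mul hsq).sub (hd2.mul hac)
  refine h.congr_deriv (Eq.symm ?_)
  field_simp
  ring_nf
  linear_combination (5 * x) * hss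

/-- Positivity of `ϱ₂(β) = (11β² + 4)√(1 − β²) − (6β³ + 9β)·arccos β` on `(−1, 1)`. -/
theorem stmt_16 (β : ℝ) (h₁ : -1 < β) (h₂ : β < 1) :
    0 < (11*β^2 + 4) * Real.sqrt (1 - β^2) - (6*β^3 + 9*β) * Real.arccos β := by
  set F := fun y : ℝ => (11*y^2+4)*Real.sqrt (1 - y^2) - (6*y^3+9*y)*Real.arccos y with hF
  have hcont : Continuous F := by
    apply Continuous.sub
    · exact (by continuity : Continuous fun y : ℝ => 11*y^2+4).mul
        (Real.continuous_sqrt.comp (by continuity))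
    · exact (by continuity : Continuous fun y : ℝ => 6*y^3+9*y).mul Real.continuous_arccos
  have hanti : StrictAntiOn F (Icc β 1) := by
    apply strictAntiOn_of_deriv_neg (convex_Icc _ _) hcont.continuousOn
    intro y hy
    rw [interior_Icc] at hy
    have hy1 : -1 < y := lt_trans h₁ hy.1
    rw [(hasDerivAt_F hy1 hy.2).deriv]
    exact G_neg hy1 hy.2
  have hF1 : F 1 = 0 := by
    simp [hF, Real.arccos_one]
  have h := hanti (left_mem_Icc.2 h₂.le) (right_mem_Icc.2 h₂.le) h₂
  rw [hF1] at h
  exact h
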